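/- Let φ be a structural set in ℝ_{0,m} with m odd. Then for all a ∈ ℝ_{0,m}, Ψ₊^{φ,φ}(a) = -Ψ₋^{φ,φ}(a) = 2^{m-1}([a]₀ + [a]_m). -/

import Mathlib

open CliffordAlgebra

noncomputable section

/-- The quadratic form of `ℝ_{0,m}`: negative definite on `ℝ^m`. -/
abbrev Qf (m : ℕ) : QuadraticForm ℝ (Fin m → ℝ) :=
  QuadraticMap.weightedSumSquares ℝ (fun _ : Fin m => (-1 : ℝ))

/-- The real Clifford algebra `ℝ_{0,m}`. -/
abbrev Cl (m : ℕ) := CliffordAlgebra (Qf m)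

/-- A structural set: an orthonormal basis `ψ¹,…,ψᵐ` of `ℝᵐ`. -/
def IsStructuralSet {m : ℕ} (ψ : Fin m → (Fin m → ℝ)) : Prop :=
  ∀ i j, (∑ t, ψ i t * ψ j t) = if i = j then (1 : ℝ) else 0

/-- The ordered product `ψ_A = ψ^{j₁} ⋯ ψ^{j_k}` for `A = {j₁ < ⋯ < j_k}`. -/
def prodS {m : ℕ} (ψ : Fin m → (Fin m → ℝ)) (A : Finset (Fin m)) : Cl m :=
  ((A.sort (· ≤ ·)).map (fun i => ι (Qf m) (ψ i))).prod

/-- The operator `Ψ_k^{φ,ψ}(a) = Σ_{|A|=k} φ_A a ψ̂_A`. -/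
def PsiK {m : ℕ} (φ ψ : Fin m → (Fin m → ℝ)) (k : ℕ) (a : Cl m) : Cl m :=
  ∑ A ∈ Finset.univ.filter (fun A : Finset (Fin m) => A.card = k),
    prodS φ A * a * reverse (prodS ψ A)

/-- `Ψ₊ = Σ_{k even} Ψ_k`. -/
def PsiPlus {m : ℕ} (φ ψ : Fin m → (Fin m → ℝ)) (a : Cl m) : Cl m :=
  ∑ k ∈ (Finset.range (m + 1)).filter (fun k => Even k), PsiK φ ψ k a

/-- `Ψ₋ = Σ_{k odd} Ψ_k`. -/
def PsiMinus {m : ℕ} (φ ψ : Fin m → (Fin m → ℝ)) (a : Cl m) : Cl m :=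
  ∑ k ∈ (Finset.range (m + 1)).filter (fun k => Odd k), PsiK φ ψ k a

/-- `Ψ₁^{φ,ψ}(a) = Σⱼ φʲ a ψʲ`. -/
def Psi1 {m : ℕ} (φ ψ : Fin m → (Fin m → ℝ)) (a : Cl m) : Cl m :=
  ∑ j, ι (Qf m) (φ j) * a * ι (Qf m) (ψ j)

/-- The standard basis of `ℝᵐ`. -/
def stdB {m : ℕ} (i : Fin m) : Fin m → ℝ := Pi.single i 1

/-- The basis multivector `e_A`. -/
def eA {m : ℕ} (A : Finset (Fin m)) : Cl m := prodS stdB A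

/-- The element with coefficients `c` in the multivector basis. -/
def toCl {m : ℕ} (c : Finset (Fin m) → ℝ) : Cl m := ∑ A, c A • eA A

/-- The space `ℝ_{0,m}^{(k)}` of `k`-grade multivectors. -/
def gradeK (m k : ℕ) : Submodule ℝ (Cl m) :=
  Submodule.span ℝ {x | ∃ A : Finset (Fin m), A.card = k ∧ x = eA A}

/-- Coefficient functions of `ℝ_{0,m}`-valued maps. -/
abbrev Coef (m : ℕ) := Finset (Fin m) → ℝ

/-- The coefficients of the even part `f₊`. -/
def cEven {m : ℕ} (c : Coef m) : Coef m := fun A => if Even A.card then c A else 0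

/-- The coefficients of the odd part `f₋`. -/
def cOdd {m : ℕ} (c : Coef m) : Coef m := fun A => if Odd A.card then c A else 0

/-- The even part of a Clifford number. -/
def evenPart {m : ℕ} (a : Cl m) : Cl m :=
  (DirectSum.decompose (evenOdd (Qf m)) a 0 : evenOdd (Qf m) 0)

/-- The odd part of a Clifford number. -/
def oddPart {m : ℕ} (a : Cl m) : Cl m :=
  (DirectSum.decompose (evenOdd (Qf m)) a 1 : evenOdd (Qf m) 1)

/-- Partial derivative `∂F/∂xᵢ` of a coefficient function. -/
def pd {m : ℕ} (i : Fin m) (F : (Fin m → ℝ) → Coef m) : (Fin m → ℝ) → Coef m :=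
  fun x => fderiv ℝ F x (Pi.single i 1)

/-- The sandwich operator `φ∂[f]ψ∂ = Σᵢⱼ φⁱ (∂²f/∂xᵢ∂xⱼ) ψʲ` for `f = Σ_A F_A e_A`. -/
def sandwichD {m : ℕ} (φ ψ : Fin m → (Fin m → ℝ)) (F : (Fin m → ℝ) → Coef m)
    (x : Fin m → ℝ) : Cl m :=
  ∑ i, ∑ j, ι (Qf m) (φ i) * toCl (pd i (pd j F) x) * ι (Qf m) (ψ j)

/-- The operator `φ∂[ψ∂[f]] = Σᵢⱼ φⁱ ψʲ ∂²f/∂xᵢ∂xⱼ`. -/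
def ddD {m : ℕ} (φ ψ : Fin m → (Fin m → ℝ)) (F : (Fin m → ℝ) → Coef m)
    (x : Fin m → ℝ) : Cl m :=
  ∑ i, ∑ j, ι (Qf m) (φ i) * (ι (Qf m) (ψ j) * toCl (pd i (pd j F) x))

/-- The componentwise Laplacian `Δf = Σᵢ ∂²f/∂xᵢ²`. -/
def lapD {m : ℕ} (F : (Fin m → ℝ) → Coef m) (x : Fin m → ℝ) : Cl m :=
  ∑ i, toCl (pd i (pd i F) x)

/-! ### Auxiliary machinery for the proof -/

namespace PsiAux

open Finset

variable {m : ℕ}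

/-- List product of generators. -/
def prodL (ψ : Fin m → (Fin m → ℝ)) (l : List (Fin m)) : Cl m :=
  (l.map (fun i => ι (Qf m) (ψ i))).prod

lemma prodS_def (ψ : Fin m → (Fin m → ℝ)) (A : Finset (Fin m)) :
    prodS ψ A = prodL ψ (A.sort (· ≤ ·)) := rfl

@[simp] lemma prodL_nil (ψ : Fin m → (Fin m → ℝ)) : prodL ψ [] = 1 := rfl

lemma prodL_cons (ψ : Fin m → (Fin m → ℝ)) (j : Fin m) (l : List (Fin m)) :
    prodL ψ (j :: l) = ι (Qf m) (ψ j) * prodL ψ l := by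
  simp [prodL]

@[simp] lemma prodS_empty (ψ : Fin m → (Fin m → ℝ)) : prodS ψ (∅ : Finset (Fin m)) = 1 := by
  simp [prodS_def]

@[simp] lemma prodS_singleton (ψ : Fin m → (Fin m → ℝ)) (j : Fin m) :
    prodS ψ ({j} : Finset (Fin m)) = ι (Qf m) (ψ j) := by
  simp [prodS_def, prodL_cons]

lemma Qf_polar (u v : Fin m → ℝ) :
    QuadraticMap.polar (Qf m) u v = -2 * ∑ t, u t * v t := by
  simp only [QuadraticMap.polar, QuadraticMap.weightedSumSquares_apply, Pi.add_apply,
    smul_eq_mul]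
  rw [← Finset.sum_sub_distrib, ← Finset.sum_sub_distrib, Finset.mul_sum]
  apply Finset.sum_congr rfl
  intro t _
  ring

lemma Qf_apply_self {ψ : Fin m → (Fin m → ℝ)} (hψ : IsStructuralSet ψ) (i : Fin m) :
    Qf m (ψ i) = -1 := by
  have h := hψ i i
  rw [if_pos rfl] at h
  rw [QuadraticMap.weightedSumSquares_apply]
  simp only [smul_eq_mul, neg_one_mul]
  rw [Finset.sum_neg_distrib, h]

lemma iota_sq {ψ : Fin m → (Fin m → ℝ)} (hψ : IsStructuralSet ψ) (i : Fin m) :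
    ι (Qf m) (ψ i) * ι (Qf m) (ψ i) = -1 := by
  rw [ι_sq_scalar, Qf_apply_self hψ, map_neg, map_one]

lemma iota_anticomm {ψ : Fin m → (Fin m → ℝ)} (hψ : IsStructuralSet ψ) {i j : Fin m}
    (h : i ≠ j) : ι (Qf m) (ψ i) * ι (Qf m) (ψ j) = -(ι (Qf m) (ψ j) * ι (Qf m) (ψ i)) := by
  have hp := CliffordAlgebra.ι_mul_ι_add_swap (Q := Qf m) (ψ i) (ψ j)
  rw [Qf_polar] at hp
  have h0 := hψ i j
  rw [if_neg h] at h0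
  rw [h0] at hp
  simp only [mul_zero, map_zero] at hp
  exact eq_neg_of_add_eq_zero_left hp

lemma prodS_insert_min {ψ : Fin m → (Fin m → ℝ)} {A : Finset (Fin m)} {b : Fin m}
    (hb : b ∉ A) (h : ∀ x ∈ A, b ≤ x) :
    prodS ψ (insert b A) = ι (Qf m) (ψ b) * prodS ψ A := by
  rw [prodS_def, Finset.sort_insert _ h hb, prodL_cons]
  rfl

/-- Key sign lemma: inserting a generator costs a sign `ε = ±1`. -/
lemma prodS_insert {ψ : Fin m → (Fin m → ℝ)} (hψ : IsStructuralSet ψ) :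
    ∀ A : Finset (Fin m), ∀ j ∉ A, ∃ ε : ℝ, ε * ε = 1 ∧
      prodS ψ (insert j A) = ε • (ι (Qf m) (ψ j) * prodS ψ A) := by
  intro A
  induction A using Finset.strongInduction with
  | _ A ih =>
    intro j hj
    rcases A.eq_empty_or_nonempty with rfl | hA
    · exact ⟨1, by norm_num, by simp⟩
    · set b := A.min' hA with hbdef
      have hbA : b ∈ A := A.min'_mem hA
      have hjb : j ≠ b := fun h => hj (h ▸ hbA)
      rcases hjb.lt_or_gt with hlt | hgt
      · refine ⟨1, by norm_num, ?_⟩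
        rw [one_smul, prodS_insert_min hj (fun x hx => (hlt.trans_le (A.min'_le x hx)).le)]
      · -- b < j
        set A' := A.erase b with hA'def
        have hA'ss : A' ⊂ A := Finset.erase_ssubset hbA
        have hjA' : j ∉ A' := fun h => hj (Finset.mem_of_mem_erase h)
        obtain ⟨ε, hε, hEq⟩ := ih A' hA'ss j hjA'
        have hbA' : b ∉ A' := Finset.notMem_erase _ _
        have hmin' : ∀ x ∈ A', b ≤ x := fun x hx => A.min'_le x (Finset.mem_of_mem_erase hx)
        have h1 : prodS ψ A = ι (Qf m) (ψ b) * prodS ψ A' := by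
          conv_lhs => rw [← Finset.insert_erase hbA]
          rw [prodS_insert_min hbA' hmin']
        have hbjA' : b ∉ insert j A' := by
          simp only [Finset.mem_insert]
          rintro (rfl | h)
          · exact hjb rfl
          · exact hbA' h
        have hmin2 : ∀ x ∈ insert j A', b ≤ x := by
          intro x hx
          rcases Finset.mem_insert.mp hx with rfl | hx
          · exact hgt.le
          · exact hmin' x hx
        have h2 : prodS ψ (insert j A) = ι (Qf m) (ψ b) * prodS ψ (insert j A') := by
          rw [← prodS_insert_min hbjA' hmin2]
          congr 1
          rw [Finset.insert_comm, Finset.insert_erase hbA]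
        refine ⟨-ε, by rw [neg_mul_neg, hε], ?_⟩
        rw [h2, hEq, mul_smul_comm, ← mul_assoc, iota_anticomm hψ (Ne.symm hjb)]
        rw [h1]
        rw [neg_mul, mul_assoc]
        rw [smul_neg, neg_smul]

lemma iota_mul_prodS_not_mem {ψ : Fin m → (Fin m → ℝ)} (hψ : IsStructuralSet ψ)
    {A : Finset (Fin m)} {j : Fin m} (hj : j ∉ A) :
    ∃ ε : ℝ, ε * ε = 1 ∧ ι (Qf m) (ψ j) * prodS ψ A = ε • prodS ψ (insert j A) := by
  obtain ⟨ε, hε, h⟩ := prodS_insert hψ A j hj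
  exact ⟨ε, hε, by rw [h, smul_smul, hε, one_smul]⟩

lemma iota_mul_prodS_mem {ψ : Fin m → (Fin m → ℝ)} (hψ : IsStructuralSet ψ)
    {A : Finset (Fin m)} {j : Fin m} (hj : j ∈ A) :
    ∃ ε : ℝ, ε * ε = 1 ∧ ι (Qf m) (ψ j) * prodS ψ A = ε • prodS ψ (A.erase j) := by
  obtain ⟨ε, hε, h⟩ := prodS_insert hψ (A.erase j) j (Finset.notMem_erase _ _)
  rw [Finset.insert_erase hj] at h
  refine ⟨-ε, by rw [neg_mul_neg, hε], ?_⟩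
  rw [h, mul_smul_comm, ← mul_assoc, iota_sq hψ, neg_mul, one_mul, smul_neg, neg_smul]

/-- The conjugation building block `G_A(a) = ψ_A a ψ̂_A`. -/
def GG (ψ : Fin m → (Fin m → ℝ)) (a : Cl m) (A : Finset (Fin m)) : Cl m :=
  prodS ψ A * a * reverse (prodS ψ A)

lemma conj_GG_aux {ψ : Fin m → (Fin m → ℝ)} {A B : Finset (Fin m)} {j : Fin m} {ε : ℝ}
    (hε : ε * ε = 1) (h : ι (Qf m) (ψ j) * prodS ψ A = ε • prodS ψ B) (a : Cl m) :
    ι (Qf m) (ψ j) * GG ψ a A * ι (Qf m) (ψ j) = GG ψ a B := by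
  have hrev : reverse (prodS ψ A) * ι (Qf m) (ψ j) = ε • reverse (prodS ψ B) := by
    have := congrArg (reverse (Q := Qf m)) h
    rwa [reverse.map_mul, reverse_ι, map_smul] at this
  unfold GG
  calc ι (Qf m) (ψ j) * (prodS ψ A * a * reverse (prodS ψ A)) * ι (Qf m) (ψ j)
      = (ι (Qf m) (ψ j) * prodS ψ A) * a * (reverse (prodS ψ A) * ι (Qf m) (ψ j)) := by
        simp only [mul_assoc]
    _ = (ε • prodS ψ B) * a * (ε • reverse (prodS ψ B)) := by rw [h, hrev]
    _ = (ε * ε) • (prodS ψ B * a * reverse (prodS ψ B)) := by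
        rw [smul_mul_assoc, smul_mul_assoc, mul_smul_comm, smul_smul]
    _ = prodS ψ B * a * reverse (prodS ψ B) := by rw [hε, one_smul]

lemma conj_GG_not_mem {ψ : Fin m → (Fin m → ℝ)} (hψ : IsStructuralSet ψ)
    {A : Finset (Fin m)} {j : Fin m} (hj : j ∉ A) (a : Cl m) :
    ι (Qf m) (ψ j) * GG ψ a A * ι (Qf m) (ψ j) = GG ψ a (insert j A) := by
  obtain ⟨ε, hε, h⟩ := iota_mul_prodS_not_mem hψ hj
  exact conj_GG_aux hε h a

lemma conj_GG_mem {ψ : Fin m → (Fin m → ℝ)} (hψ : IsStructuralSet ψ)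
    {A : Finset (Fin m)} {j : Fin m} (hj : j ∈ A) (a : Cl m) :
    ι (Qf m) (ψ j) * GG ψ a A * ι (Qf m) (ψ j) = GG ψ a (A.erase j) := by
  obtain ⟨ε, hε, h⟩ := iota_mul_prodS_mem hψ hj
  exact conj_GG_aux hε h a

/-- `Fs ψ s a S = Σ_{A ⊆ S} s^{|A|} ψ_A a ψ̂_A`. -/
def Fs (ψ : Fin m → (Fin m → ℝ)) (s : ℝ) (a : Cl m) (S : Finset (Fin m)) : Cl m :=
  ∑ A ∈ S.powerset, s ^ A.card • GG ψ a A

lemma Fs_insert {ψ : Fin m → (Fin m → ℝ)} (hψ : IsStructuralSet ψ) {S : Finset (Fin m)}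
    {i : Fin m} (hi : i ∉ S) (s : ℝ) (a : Cl m) :
    Fs ψ s a (insert i S) =
      Fs ψ s a S + s • (ι (Qf m) (ψ i) * Fs ψ s a S * ι (Qf m) (ψ i)) := by
  unfold Fs
  rw [Finset.sum_powerset_insert hi]
  congr 1
  rw [Finset.mul_sum, Finset.sum_mul, Finset.smul_sum]
  apply Finset.sum_congr rfl
  intro A hA
  have hiA : i ∉ A := fun h => hi (Finset.mem_powerset.mp hA h)
  rw [Finset.card_insert_of_notMem hiA, pow_succ, mul_smul_comm, smul_mul_assoc,
    conj_GG_not_mem hψ hiA, smul_smul, mul_comm]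

lemma psiK_eq_sum_GG (ψ : Fin m → (Fin m → ℝ)) (k : ℕ) (a : Cl m) :
    PsiK ψ ψ k a =
      ∑ A ∈ Finset.univ.filter (fun A : Finset (Fin m) => A.card = k), GG ψ a A := rfl

lemma Fs_univ_eq (ψ : Fin m → (Fin m → ℝ)) (s : ℝ) (a : Cl m) :
    Fs ψ s a Finset.univ = ∑ k ∈ Finset.range (m + 1), s ^ k • PsiK ψ ψ k a := by
  unfold Fs
  rw [Finset.powerset_univ]
  rw [eq_comm]
  calc ∑ k ∈ Finset.range (m + 1), s ^ k • PsiK ψ ψ k a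
      = ∑ k ∈ Finset.range (m + 1),
          ∑ A ∈ Finset.univ.filter (fun A : Finset (Fin m) => A.card = k),
            s ^ A.card • GG ψ a A := by
        apply Finset.sum_congr rfl
        intro k _
        rw [psiK_eq_sum_GG, Finset.smul_sum]
        apply Finset.sum_congr rfl
        intro A hA
        rw [(Finset.mem_filter.mp hA).2]
    _ = ∑ A : Finset (Fin m), s ^ A.card • GG ψ a A := by
        apply Finset.sum_fiberwise_of_maps_to
        intro A _
        rw [Finset.mem_range, Nat.lt_succ_iff]
        simpa using Finset.card_le_univ A

/-! ### The recursion `Ψ₁ ∘ Ψ_{k+1} = (k+2) Ψ_{k+2} + (m-k) Ψ_k` -/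

lemma psi1_eq (ψ : Fin m → (Fin m → ℝ)) (a : Cl m) :
    Psi1 ψ ψ a = ∑ j, ι (Qf m) (ψ j) * a * ι (Qf m) (ψ j) := rfl

lemma count_erase (k : ℕ) (f : Finset (Fin m) → Cl m) :
    (∑ j : Fin m, ∑ A ∈ (Finset.univ.filter
        (fun A : Finset (Fin m) => A.card = k + 1)).filter (fun A => j ∈ A),
      f (A.erase j))
    = ((m - k : ℕ) : ℝ) •
        ∑ B ∈ Finset.univ.filter (fun B : Finset (Fin m) => B.card = k), f B := by
  have step1 : ∀ j : Fin m,
      (∑ A ∈ (Finset.univ.filter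
          (fun A : Finset (Fin m) => A.card = k + 1)).filter (fun A => j ∈ A),
        f (A.erase j))
      = ∑ B ∈ (Finset.univ.filter
          (fun B : Finset (Fin m) => B.card = k)).filter (fun B => j ∉ B), f B := by
    intro j
    refine Finset.sum_bij' (fun A _ => A.erase j) (fun B _ => insert j B) ?_ ?_ ?_ ?_ ?_
    · intro A hA
      simp only [Finset.mem_filter, Finset.mem_univ, true_and] at hA ⊢
      exact ⟨by rw [Finset.card_erase_of_mem hA.2, hA.1]; rfl, Finset.notMem_erase _ _⟩
    · intro B hB
      simp only [Finset.mem_filter, Finset.mem_univ, true_and] at hB ⊢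
      exact ⟨by rw [Finset.card_insert_of_notMem hB.2, hB.1], Finset.mem_insert_self _ _⟩
    · intro A hA
      simp only [Finset.mem_filter] at hA
      exact Finset.insert_erase hA.2
    · intro B hB
      simp only [Finset.mem_filter] at hB
      exact Finset.erase_insert hB.2
    · intro A _
      rfl
  rw [Finset.sum_congr rfl (fun j _ => step1 j)]
  rw [Finset.sum_congr rfl (fun j _ => Finset.sum_filter (fun B => j ∉ B) f), Finset.sum_comm,
    Finset.smul_sum]
  apply Finset.sum_congr rfl
  intro B hB
  rw [← Finset.sum_filter, Finset.sum_const]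
  have hc : Finset.univ.filter (fun j => j ∉ B) = Bᶜ := by ext x; simp
  rw [hc, Finset.card_compl, Fintype.card_fin, (Finset.mem_filter.mp hB).2,
    Nat.cast_smul_eq_nsmul]

lemma count_insert (k : ℕ) (f : Finset (Fin m) → Cl m) :
    (∑ j : Fin m, ∑ A ∈ (Finset.univ.filter
        (fun A : Finset (Fin m) => A.card = k + 1)).filter (fun A => j ∉ A),
      f (insert j A))
    = ((k + 2 : ℕ) : ℝ) •
        ∑ B ∈ Finset.univ.filter (fun B : Finset (Fin m) => B.card = k + 2), f B := by
  have step1 : ∀ j : Fin m,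
      (∑ A ∈ (Finset.univ.filter
          (fun A : Finset (Fin m) => A.card = k + 1)).filter (fun A => j ∉ A),
        f (insert j A))
      = ∑ B ∈ (Finset.univ.filter
          (fun B : Finset (Fin m) => B.card = k + 2)).filter (fun B => j ∈ B), f B := by
    intro j
    refine Finset.sum_bij' (fun A _ => insert j A) (fun B _ => B.erase j) ?_ ?_ ?_ ?_ ?_
    · intro A hA
      simp only [Finset.mem_filter, Finset.mem_univ, true_and] at hA ⊢
      exact ⟨by rw [Finset.card_insert_of_notMem hA.2, hA.1], Finset.mem_insert_self _ _⟩
    · intro B hB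
      simp only [Finset.mem_filter, Finset.mem_univ, true_and] at hB ⊢
      exact ⟨by rw [Finset.card_erase_of_mem hB.2, hB.1]; rfl, Finset.notMem_erase _ _⟩
    · intro A hA
      simp only [Finset.mem_filter] at hA
      exact Finset.erase_insert hA.2
    · intro B hB
      simp only [Finset.mem_filter] at hB
      exact Finset.insert_erase hB.2
    · intro A _
      rfl
  rw [Finset.sum_congr rfl (fun j _ => step1 j)]
  rw [Finset.sum_congr rfl (fun j _ => Finset.sum_filter (fun B => j ∈ B) f), Finset.sum_comm,
    Finset.smul_sum]
  apply Finset.sum_congr rfl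
  intro B hB
  rw [← Finset.sum_filter, Finset.sum_const]
  have hc : Finset.univ.filter (fun j => j ∈ B) = B := by ext x; simp
  rw [hc, (Finset.mem_filter.mp hB).2, Nat.cast_smul_eq_nsmul]

lemma psi1_psiK {ψ : Fin m → (Fin m → ℝ)} (hψ : IsStructuralSet ψ) (k : ℕ) (a : Cl m) :
    Psi1 ψ ψ (PsiK ψ ψ (k + 1) a)
      = ((k + 2 : ℕ) : ℝ) • PsiK ψ ψ (k + 2) a + ((m - k : ℕ) : ℝ) • PsiK ψ ψ k a := by
  rw [psi1_eq, psiK_eq_sum_GG ψ (k + 1) a]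
  calc (∑ j, ι (Qf m) (ψ j) *
          (∑ A ∈ Finset.univ.filter (fun A : Finset (Fin m) => A.card = k + 1), GG ψ a A) *
          ι (Qf m) (ψ j))
      = ∑ j, ∑ A ∈ Finset.univ.filter (fun A : Finset (Fin m) => A.card = k + 1),
          ι (Qf m) (ψ j) * GG ψ a A * ι (Qf m) (ψ j) := by
        apply Finset.sum_congr rfl
        intro j _
        rw [Finset.mul_sum, Finset.sum_mul]
    _ = ∑ j, ((∑ A ∈ (Finset.univ.filter
            (fun A : Finset (Fin m) => A.card = k + 1)).filter (fun A => j ∈ A),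
          GG ψ a (A.erase j))
        + ∑ A ∈ (Finset.univ.filter
            (fun A : Finset (Fin m) => A.card = k + 1)).filter (fun A => j ∉ A),
          GG ψ a (insert j A)) := by
        apply Finset.sum_congr rfl
        intro j _
        rw [← Finset.sum_filter_add_sum_filter_not
          (Finset.univ.filter (fun A : Finset (Fin m) => A.card = k + 1)) (fun A => j ∈ A)]
        congr 1
        · apply Finset.sum_congr rfl
          intro A hA
          exact conj_GG_mem hψ (Finset.mem_filter.mp hA).2 a
        · apply Finset.sum_congr rfl
          intro A hA
          exact conj_GG_not_mem hψ (Finset.mem_filter.mp hA).2 a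
    _ = _ := by
        rw [Finset.sum_add_distrib, count_erase k (GG ψ a), count_insert k (GG ψ a),
          ← psiK_eq_sum_GG, ← psiK_eq_sum_GG, add_comm]

lemma psiK_zero (ψ : Fin m → (Fin m → ℝ)) (a : Cl m) : PsiK ψ ψ 0 a = a := by
  rw [psiK_eq_sum_GG]
  have h : Finset.univ.filter (fun A : Finset (Fin m) => A.card = 0) = {∅} := by
    ext A; simp [Finset.card_eq_zero]
  rw [h, Finset.sum_singleton]
  simp [GG, reverse.map_one]

lemma psiK_one (ψ : Fin m → (Fin m → ℝ)) (a : Cl m) : PsiK ψ ψ 1 a = Psi1 ψ ψ a := by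
  rw [psiK_eq_sum_GG, psi1_eq, eq_comm]
  apply Finset.sum_bij (i := fun j _ => ({j} : Finset (Fin m)))
  · intro j _; simp
  · intro a₁ _ a₂ _ h; exact Finset.singleton_injective h
  · intro B hB
    simp only [Finset.mem_filter] at hB
    obtain ⟨j, rfl⟩ := Finset.card_eq_one.mp hB.2
    exact ⟨j, Finset.mem_univ _, rfl⟩
  · intro j _; simp [GG, reverse_ι]

lemma std_structural : IsStructuralSet (stdB (m := m)) := by
  intro i j
  simp only [stdB, Pi.single_apply]
  rcases eq_or_ne i j with rfl | h
  · simp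
  · rw [if_neg h]
    apply Finset.sum_eq_zero
    intro t _
    rcases eq_or_ne t i with rfl | ht
    · rw [if_neg (fun hh : t = j => h (hh ▸ rfl)), mul_zero]
    · rw [if_neg ht, zero_mul]

lemma psi1_basechange {φ : Fin m → (Fin m → ℝ)} (hφ : IsStructuralSet φ) (a : Cl m) :
    Psi1 φ φ a = Psi1 stdB stdB a := by
  classical
  have hcol : ∀ s t : Fin m, (∑ j, φ j s * φ j t) = if s = t then (1 : ℝ) else 0 := by
    intro s t
    set M : Matrix (Fin m) (Fin m) ℝ := Matrix.of φ with hM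
    have h1 : M * M.transpose = 1 := by
      ext i j
      simp only [Matrix.mul_apply, Matrix.transpose_apply, Matrix.one_apply, hM, Matrix.of_apply]
      exact hφ i j
    have h2 : M.transpose * M = 1 := mul_eq_one_comm.mp h1
    have h3 := congrFun (congrFun h2 s) t
    simpa only [Matrix.mul_apply, Matrix.transpose_apply, Matrix.one_apply, hM,
      Matrix.of_apply] using h3
  have hexp : ∀ j, ι (Qf m) (φ j) = ∑ s, φ j s • ι (Qf m) (stdB s) := by
    intro j
    have hv : (φ j : Fin m → ℝ) = ∑ s, φ j s • stdB s := by
      conv_lhs => rw [← Finset.univ_sum_single (φ j)]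
      apply Finset.sum_congr rfl
      intro s _
      rw [stdB, ← Pi.single_smul, smul_eq_mul, mul_one]
    have h := congrArg (fun v => ι (Qf m) v) hv
    simp only [map_sum, map_smul] at h
    exact h
  calc Psi1 φ φ a
      = ∑ j, (∑ s, φ j s • ι (Qf m) (stdB s)) * a * (∑ t, φ j t • ι (Qf m) (stdB t)) := by
        rw [psi1_eq]
        exact Finset.sum_congr rfl (fun j _ => by rw [hexp j])
    _ = ∑ j, ∑ s, ∑ t, (φ j s * φ j t) • (ι (Qf m) (stdB s) * a * ι (Qf m) (stdB t)) := by
        apply Finset.sum_congr rfl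
        intro j _
        rw [Finset.sum_mul, Finset.sum_mul]
        apply Finset.sum_congr rfl
        intro s _
        rw [Finset.mul_sum]
        apply Finset.sum_congr rfl
        intro t _
        rw [smul_mul_assoc, smul_mul_assoc, mul_smul_comm, smul_smul]
    _ = ∑ s, ∑ t, (∑ j, φ j s * φ j t) • (ι (Qf m) (stdB s) * a * ι (Qf m) (stdB t)) := by
        rw [Finset.sum_comm]
        apply Finset.sum_congr rfl
        intro s _
        rw [Finset.sum_comm]
        apply Finset.sum_congr rfl
        intro t _
        rw [Finset.sum_smul]
    _ = ∑ s, ι (Qf m) (stdB s) * a * ι (Qf m) (stdB s) := by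
        apply Finset.sum_congr rfl
        intro s _
        simp only [hcol, ite_smul, one_smul, zero_smul]
        rw [Finset.sum_ite_eq]
        simp
    _ = Psi1 stdB stdB a := (psi1_eq _ _).symm

lemma psiK_basechange {φ : Fin m → (Fin m → ℝ)} (hφ : IsStructuralSet φ) :
    ∀ (k : ℕ) (a : Cl m), PsiK φ φ k a = PsiK stdB stdB k a := by
  intro k
  induction k using Nat.twoStepInduction with
  | zero => intro a; rw [psiK_zero, psiK_zero]
  | one => intro a; rw [psiK_one, psiK_one, psi1_basechange hφ]
  | more k ih1 ih2 =>
    intro a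
    have e1 := psi1_psiK hφ k a
    have e2 := psi1_psiK (std_structural (m := m)) k a
    rw [ih2 a, psi1_basechange hφ, e2, ih1 a] at e1
    have e3 := add_right_cancel e1
    push_cast at e3
    have hne : ((k : ℝ) + 2) ≠ 0 := by positivity
    have e4 := congrArg (fun x => ((k : ℝ) + 2)⁻¹ • x) e3
    simp only [smul_smul, inv_mul_cancel₀ hne, one_smul] at e4
    exact e4.symm

/-! ### The eigenvalue computation in the standard basis -/

lemma iota_comm_prodL {ψ : Fin m → (Fin m → ℝ)} (hψ : IsStructuralSet ψ) (i : Fin m) :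
    ∀ l : List (Fin m),
      ι (Qf m) (ψ i) * prodL ψ l
        = ((-1 : ℝ) ^ (l.length - l.count i)) • (prodL ψ l * ι (Qf m) (ψ i)) := by
  intro l
  induction l with
  | nil => simp
  | cons j t ih =>
    rw [prodL_cons]
    rcases eq_or_ne i j with rfl | hij
    · have he : (i :: t).length - (i :: t).count i = t.length - t.count i := by
        simp [List.count_cons]
      rw [he]
      conv_rhs => rw [ih, smul_mul_assoc, smul_smul]
      have hss : ((-1 : ℝ) ^ (t.length - t.count i)) * ((-1 : ℝ) ^ (t.length - t.count i)) = 1 := by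
        rw [← pow_add]
        exact Even.neg_one_pow ⟨_, rfl⟩
      rw [hss, one_smul, ← mul_assoc, iota_sq hψ, mul_assoc, iota_sq hψ, neg_one_mul,
        mul_neg_one]
    · have hcount : t.count i ≤ t.length := List.count_le_length
      rw [← mul_assoc, iota_anticomm hψ hij, neg_mul, mul_assoc, ih, mul_smul_comm,
        ← mul_assoc, ← prodL_cons, ← neg_smul]
      congr 1
      have hlen : (j :: t).length - (j :: t).count i = (t.length - t.count i) + 1 := by
        simp [List.count_cons, hij.symm]
        omega
      rw [hlen, pow_succ]
      ring

/-- The eigenvalue of conjugation `e_i · e_B · e_i = lam i B • e_B`. -/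
def lam (i : Fin m) (B : Finset (Fin m)) : ℝ :=
  -(-1 : ℝ) ^ (B.card - if i ∈ B then 1 else 0)

lemma conj_eA (i : Fin m) (B : Finset (Fin m)) :
    ι (Qf m) (stdB i) * eA B * ι (Qf m) (stdB i) = lam i B • eA B := by
  have hcount : (B.sort (· ≤ ·)).count i = if i ∈ B then 1 else 0 := by
    rcases em (i ∈ B) with h | h
    · rw [if_pos h]
      exact List.count_eq_one_of_mem (B.sort_nodup _) ((Finset.mem_sort _).mpr h)
    · rw [if_neg h]
      exact List.count_eq_zero.mpr (fun hh => h ((Finset.mem_sort _).mp hh))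
  have hlen : (B.sort (· ≤ ·)).length = B.card := Finset.length_sort _
  have h1 : eA B = prodL stdB (B.sort (· ≤ ·)) := rfl
  rw [h1, iota_comm_prodL (std_structural (m := m)) i, smul_mul_assoc, mul_assoc,
    iota_sq (std_structural (m := m)), hlen, hcount, lam]
  rw [mul_neg_one, smul_neg, neg_smul]

lemma Fs_eA (s : ℝ) (B : Finset (Fin m)) (S : Finset (Fin m)) :
    Fs stdB s (eA B) S = (∏ i ∈ S, (1 + s * lam i B)) • eA B := by
  induction S using Finset.induction_on with
  | empty => simp [Fs, GG, reverse.map_one, eA]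
  | insert i S hi ih =>
    rw [Fs_insert (std_structural (m := m)) hi, ih, Finset.prod_insert hi]
    rw [mul_smul_comm, smul_mul_assoc, conj_eA, smul_smul, smul_smul, ← add_smul]
    congr 1
    ring

lemma prod_lam_one (hm : Odd m) (B : Finset (Fin m)) :
    (∏ i : Fin m, (1 + 1 * lam i B)) = 0 := by
  rcases Nat.even_or_odd B.card with he | ho
  · have hBu : B ≠ Finset.univ := by
      intro h
      rw [h, Finset.card_univ, Fintype.card_fin] at he
      exact (Nat.not_even_iff_odd.mpr hm) he
    obtain ⟨i, hi⟩ : ∃ i, i ∉ B := by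
      by_contra hcon
      push_neg at hcon
      exact hBu (Finset.eq_univ_iff_forall.mpr hcon)
    apply Finset.prod_eq_zero (Finset.mem_univ i)
    rw [lam, if_neg hi, Nat.sub_zero, he.neg_one_pow]
    ring
  · have hB0 : B.Nonempty := Finset.card_pos.mp (by rcases ho with ⟨t, ht⟩; omega)
    obtain ⟨i, hi⟩ := hB0
    apply Finset.prod_eq_zero (Finset.mem_univ i)
    rw [lam, if_pos hi]
    have : Even (B.card - 1) := Nat.Odd.sub_odd ho odd_one
    rw [this.neg_one_pow]
    ring

lemma prod_lam_neg_one (hm : Odd m) (B : Finset (Fin m)) :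
    (∏ i : Fin m, (1 + (-1) * lam i B))
      = if B = ∅ ∨ B = Finset.univ then (2 : ℝ) ^ m else 0 := by
  rcases em (B = ∅ ∨ B = Finset.univ) with h | h
  · rw [if_pos h]
    rcases h with rfl | rfl
    · have : ∀ i : Fin m, 1 + (-1) * lam i (∅ : Finset (Fin m)) = 2 := by
        intro i
        rw [lam]
        norm_num
      rw [Finset.prod_congr rfl (fun i _ => this i), Finset.prod_const, Finset.card_univ,
        Fintype.card_fin]
    · have : ∀ i : Fin m, 1 + (-1) * lam i (Finset.univ : Finset (Fin m)) = 2 := by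
        intro i
        rw [lam, if_pos (Finset.mem_univ i), Finset.card_univ, Fintype.card_fin]
        have : Even (m - 1) := Nat.Odd.sub_odd hm odd_one
        rw [this.neg_one_pow]
        ring
      rw [Finset.prod_congr rfl (fun i _ => this i), Finset.prod_const, Finset.card_univ,
        Fintype.card_fin]
  · rw [if_neg h]
    push_neg at h
    obtain ⟨hB0, hBu⟩ := h
    rcases Nat.even_or_odd B.card with he | ho
    · have hB0' : B.Nonempty := hB0
      obtain ⟨i, hi⟩ := hB0'
      apply Finset.prod_eq_zero (Finset.mem_univ i)
      rw [lam, if_pos hi]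
      have hcard : 1 ≤ B.card := Finset.card_pos.mpr ⟨i, hi⟩
      have : Odd (B.card - 1) := Nat.Even.sub_odd hcard he odd_one
      rw [this.neg_one_pow]
      ring
    · obtain ⟨i, hi⟩ : ∃ i, i ∉ B := by
        by_contra hcon
        push_neg at hcon
        exact hBu (Finset.eq_univ_iff_forall.mpr hcon)
      apply Finset.prod_eq_zero (Finset.mem_univ i)
      rw [lam, if_neg hi, Nat.sub_zero, ho.neg_one_pow]
      ring

lemma Fs_toCl (ψ : Fin m → (Fin m → ℝ)) (s : ℝ) (c : Coef m) (S : Finset (Fin m)) :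
    Fs ψ s (toCl c) S = ∑ B, c B • Fs ψ s (eA B) S := by
  have hL : ∀ A : Finset (Fin m),
      s ^ A.card • GG ψ (toCl c) A
        = ∑ B, (s ^ A.card * c B) • (prodS ψ A * eA B * reverse (prodS ψ A)) := by
    intro A
    rw [GG, toCl, Finset.mul_sum, Finset.sum_mul, Finset.smul_sum]
    apply Finset.sum_congr rfl
    intro B _
    rw [mul_smul_comm, smul_mul_assoc, smul_smul]
  have hR : ∀ B : Finset (Fin m),
      c B • Fs ψ s (eA B) S
        = ∑ A ∈ S.powerset, (s ^ A.card * c B) • (prodS ψ A * eA B * reverse (prodS ψ A)) := by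
    intro B
    rw [Fs, Finset.smul_sum]
    apply Finset.sum_congr rfl
    intro A _
    rw [GG, smul_smul, mul_comm]
  calc Fs ψ s (toCl c) S
      = ∑ A ∈ S.powerset, ∑ B,
          (s ^ A.card * c B) • (prodS ψ A * eA B * reverse (prodS ψ A)) := by
        rw [Fs]
        exact Finset.sum_congr rfl (fun A _ => hL A)
    _ = ∑ B, ∑ A ∈ S.powerset,
          (s ^ A.card * c B) • (prodS ψ A * eA B * reverse (prodS ψ A)) := Finset.sum_comm
    _ = ∑ B, c B • Fs ψ s (eA B) S := Finset.sum_congr rfl (fun B _ => (hR B).symm)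

lemma Fs_std_one (hm : Odd m) (c : Coef m) :
    Fs stdB 1 (toCl c) Finset.univ = 0 := by
  rw [Fs_toCl]
  apply Finset.sum_eq_zero
  intro B _
  rw [Fs_eA, prod_lam_one hm, zero_smul, smul_zero]

lemma Fs_std_neg_one (hm : Odd m) (c : Coef m) :
    Fs stdB (-1) (toCl c) Finset.univ
      = (2 : ℝ) ^ m • (c ∅ • (1 : Cl m) + c Finset.univ • eA Finset.univ) := by
  have hm0 : 0 < m := by rcases hm with ⟨t, ht⟩; omega
  have huniv_ne : (Finset.univ : Finset (Fin m)).Nonempty := ⟨⟨0, hm0⟩, Finset.mem_univ _⟩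
  have hne : (∅ : Finset (Fin m)) ≠ Finset.univ :=
    fun h => (Finset.nonempty_iff_ne_empty.mp huniv_ne) h.symm
  rw [Fs_toCl]
  have hterm : ∀ B : Finset (Fin m),
      c B • Fs stdB (-1) (eA B) Finset.univ
        = if B = ∅ ∨ B = Finset.univ then c B • ((2 : ℝ) ^ m • eA B) else 0 := by
    intro B
    rw [Fs_eA, prod_lam_neg_one hm]
    split
    · rfl
    · rw [zero_smul, smul_zero]
  rw [Finset.sum_congr rfl (fun B _ => hterm B)]
  rw [← Finset.sum_subset
    (Finset.subset_univ ({∅, Finset.univ} : Finset (Finset (Fin m))))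
    (fun B _ hB => by
      have hno : ¬(B = ∅ ∨ B = Finset.univ) := by
        intro h
        exact hB (by simpa only [Finset.mem_insert, Finset.mem_singleton] using h)
      rw [if_neg hno])]
  rw [Finset.sum_insert (by simpa using hne), Finset.sum_singleton]
  rw [if_pos (Or.inl rfl), if_pos (Or.inr rfl)]
  rw [smul_add]
  have h1 : eA (∅ : Finset (Fin m)) = 1 := prodS_empty _
  rw [h1, smul_comm (c ∅), smul_comm (c Finset.univ)]

lemma plus_add_minus (φ : Fin m → (Fin m → ℝ)) (a : Cl m) :
    PsiPlus φ φ a + PsiMinus φ φ a = Fs φ 1 a Finset.univ := by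
  rw [Fs_univ_eq]
  simp only [one_pow, one_smul]
  rw [PsiPlus, PsiMinus,
    ← Finset.sum_filter_add_sum_filter_not (Finset.range (m + 1)) (fun k => Even k)
      (fun k => PsiK φ φ k a)]
  congr 1
  apply Finset.sum_congr _ (fun _ _ => rfl)
  apply Finset.filter_congr
  intro k _
  simp [Nat.not_even_iff_odd]

lemma plus_sub_minus (φ : Fin m → (Fin m → ℝ)) (a : Cl m) :
    PsiPlus φ φ a - PsiMinus φ φ a = Fs φ (-1) a Finset.univ := by
  rw [Fs_univ_eq]
  have hsplit := Finset.sum_filter_add_sum_filter_not (Finset.range (m + 1))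
    (fun k => Even k) (fun k => (-1 : ℝ) ^ k • PsiK φ φ k a)
  have h1 : (∑ k ∈ (Finset.range (m + 1)).filter (fun k => Even k),
      (-1 : ℝ) ^ k • PsiK φ φ k a) = PsiPlus φ φ a := by
    rw [PsiPlus]
    apply Finset.sum_congr rfl
    intro k hk
    rw [(Finset.mem_filter.mp hk).2.neg_one_pow, one_smul]
  have h2 : (∑ k ∈ (Finset.range (m + 1)).filter (fun k => ¬Even k),
      (-1 : ℝ) ^ k • PsiK φ φ k a) = -PsiMinus φ φ a := by
    rw [PsiMinus, ← Finset.sum_neg_distrib]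
    apply Finset.sum_congr
    · apply Finset.filter_congr
      intro k _
      simp [Nat.not_even_iff_odd]
    · intro k hk
      have hodd : Odd k := (Finset.mem_filter.mp hk).2
      rw [hodd.neg_one_pow, neg_smul, one_smul]
  rw [h1, h2] at hsplit
  rw [← hsplit, sub_eq_add_neg]

end PsiAux

/-- for a structural set `φ` with `m` odd, for all
`a = Σ_A c_A e_A ∈ ℝ_{0,m}`, `Ψ₊^{φ,φ}(a) = -Ψ₋^{φ,φ}(a) = 2^{m-1}([a]₀ + [a]_m)`. -/
theorem psiPlus_psiMinus_odd_dim {m : ℕ} (φ : Fin m → (Fin m → ℝ))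
    (hφ : IsStructuralSet φ) (hm : Odd m) (c : Coef m) :
    PsiPlus φ φ (toCl c) =
        ((2 : ℝ) ^ (m - 1)) • (c ∅ • (1 : Cl m) + c Finset.univ • eA Finset.univ) ∧
      PsiMinus φ φ (toCl c) =
        -(((2 : ℝ) ^ (m - 1)) • (c ∅ • (1 : Cl m) + c Finset.univ • eA Finset.univ)) := by
  classical
  have hm0 : 0 < m := by rcases hm with ⟨t, ht⟩; omega
  set E : Cl m := c ∅ • (1 : Cl m) + c Finset.univ • eA Finset.univ with hE
  have hbase : ∀ (s : ℝ), PsiAux.Fs φ s (toCl c) Finset.univ = PsiAux.Fs stdB s (toCl c) Finset.univ := by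
    intro s
    rw [PsiAux.Fs_univ_eq, PsiAux.Fs_univ_eq]
    exact Finset.sum_congr rfl (fun k _ => by rw [PsiAux.psiK_basechange hφ k (toCl c)])
  have hplus : PsiPlus φ φ (toCl c) + PsiMinus φ φ (toCl c) = 0 := by
    rw [PsiAux.plus_add_minus, hbase, PsiAux.Fs_std_one hm c]
  have hminus : PsiPlus φ φ (toCl c) - PsiMinus φ φ (toCl c) = (2 : ℝ) ^ m • E := by
    rw [PsiAux.plus_sub_minus, hbase, PsiAux.Fs_std_neg_one hm c]
  have hM : PsiMinus φ φ (toCl c) = -PsiPlus φ φ (toCl c) :=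
    eq_neg_of_add_eq_zero_right hplus
  rw [hM, sub_neg_eq_add] at hminus
  have hpow : (2 : ℝ) ^ m = 2 * (2 : ℝ) ^ (m - 1) := by
    rw [← pow_succ' (2 : ℝ) (m - 1), Nat.sub_add_cancel hm0]
  have h2 : (2 : ℝ) • PsiPlus φ φ (toCl c) = (2 : ℝ) • (((2 : ℝ) ^ (m - 1)) • E) := by
    rw [two_smul, hminus, hpow, mul_smul]
  have hP : PsiPlus φ φ (toCl c) = ((2 : ℝ) ^ (m - 1)) • E := by
    have := congrArg (fun x => (2 : ℝ)⁻¹ • x) h2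
    simpa [smul_smul] using this
  exact ⟨hP, by rw [hM, hP]⟩
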